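/- In the two-level least squares setting with the given QR decompositions, the matrix A = BᵀB is invertible and the p×p sub-block A¹¹ of A⁻¹ satisfies A¹¹ = R⁻¹ R⁻ᵀ. -/

import Mathlib

open Matrix

/-- The two-level least-squares design matrix with row blocks
`[Bᵢ | 0 … B̊ᵢ … 0]`; the rows of block `i` are indexed by `Fin q ⊕ Fin (k i)`
(so that `nᵢ = q + k i ≥ q`). -/
def twoLevelB {p q m : ℕ} {k : Fin m → ℕ}
    (B1 : (i : Fin m) → Matrix (Fin q ⊕ Fin (k i)) (Fin p) ℝ)
    (B2 : (i : Fin m) → Matrix (Fin q ⊕ Fin (k i)) (Fin q) ℝ) :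
    Matrix ((i : Fin m) × (Fin q ⊕ Fin (k i))) (Fin p ⊕ Fin m × Fin q) ℝ :=
  Matrix.of fun x y =>
    match y with
    | Sum.inl a => B1 x.1 x.2 a
    | Sum.inr (i, b) => if x.1 = i then B2 x.1 x.2 b else 0

/-- `C₀ᵢ := Qᵢᵀ Bᵢ`. -/
def C0 {p q m : ℕ} {k : Fin m → ℕ}
    (Q1 : (i : Fin m) → Matrix (Fin q ⊕ Fin (k i)) (Fin q ⊕ Fin (k i)) ℝ)
    (B1 : (i : Fin m) → Matrix (Fin q ⊕ Fin (k i)) (Fin p) ℝ)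
    (i : Fin m) : Matrix (Fin q ⊕ Fin (k i)) (Fin p) ℝ :=
  (Q1 i)ᵀ * B1 i

/-- `C₁ᵢ`: the first `q` rows of `C₀ᵢ`. -/
def C1 {p q m : ℕ} {k : Fin m → ℕ}
    (Q1 : (i : Fin m) → Matrix (Fin q ⊕ Fin (k i)) (Fin q ⊕ Fin (k i)) ℝ)
    (B1 : (i : Fin m) → Matrix (Fin q ⊕ Fin (k i)) (Fin p) ℝ)
    (i : Fin m) : Matrix (Fin q) (Fin p) ℝ :=
  (C0 Q1 B1 i).submatrix Sum.inl id

/-- `C₂ᵢ`: the remaining `nᵢ − q` rows of `C₀ᵢ`. -/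
def C2 {p q m : ℕ} {k : Fin m → ℕ}
    (Q1 : (i : Fin m) → Matrix (Fin q ⊕ Fin (k i)) (Fin q ⊕ Fin (k i)) ℝ)
    (B1 : (i : Fin m) → Matrix (Fin q ⊕ Fin (k i)) (Fin p) ℝ)
    (i : Fin m) : Matrix (Fin (k i)) (Fin p) ℝ :=
  (C0 Q1 B1 i).submatrix Sum.inr id

/-- The row-stack of `C₂₁, …, C₂ₘ`. -/
def stackC2 {p q m : ℕ} {k : Fin m → ℕ}
    (Q1 : (i : Fin m) → Matrix (Fin q ⊕ Fin (k i)) (Fin q ⊕ Fin (k i)) ℝ)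
    (B1 : (i : Fin m) → Matrix (Fin q ⊕ Fin (k i)) (Fin p) ℝ) :
    Matrix ((i : Fin m) × Fin (k i)) (Fin p) ℝ :=
  Matrix.of fun x a => C2 Q1 B1 x.1 x.2 a

section Aux
variable {m q p : ℕ} {k : Fin m → ℕ}
    (B1 : (i : Fin m) → Matrix (Fin q ⊕ Fin (k i)) (Fin p) ℝ)
    (B2 : (i : Fin m) → Matrix (Fin q ⊕ Fin (k i)) (Fin q) ℝ)
    (Q1 : (i : Fin m) → Matrix (Fin q ⊕ Fin (k i)) (Fin q ⊕ Fin (k i)) ℝ)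
    (R1 : (i : Fin m) → Matrix (Fin q) (Fin q) ℝ)

lemma aux_C0_eq (i : Fin m) :
    C0 Q1 B1 i = Matrix.fromRows (C1 Q1 B1 i) (C2 Q1 B1 i) := by
  ext x a; cases x <;> rfl

lemma aux_B1_eq (hQ1' : ∀ i, Q1 i * (Q1 i)ᵀ = 1) (i : Fin m) :
    B1 i = Q1 i * C0 Q1 B1 i := by
  rw [C0, ← Matrix.mul_assoc, hQ1', Matrix.one_mul]

lemma aux_B1B1 (hQ1 : ∀ i, (Q1 i)ᵀ * Q1 i = 1) (hQ1' : ∀ i, Q1 i * (Q1 i)ᵀ = 1) (i : Fin m) :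
    (B1 i)ᵀ * B1 i = (C1 Q1 B1 i)ᵀ * C1 Q1 B1 i + (C2 Q1 B1 i)ᵀ * C2 Q1 B1 i := by
  conv_lhs => rw [aux_B1_eq B1 Q1 hQ1' i]
  rw [Matrix.transpose_mul, Matrix.mul_assoc, ← Matrix.mul_assoc (Q1 i)ᵀ, hQ1, Matrix.one_mul,
    aux_C0_eq, Matrix.transpose_fromRows, Matrix.fromCols_mul_fromRows]

lemma aux_B1B2 (hQ1 : ∀ i, (Q1 i)ᵀ * Q1 i = 1) (hQ1' : ∀ i, Q1 i * (Q1 i)ᵀ = 1)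
    (hQR1 : ∀ i, B2 i = Q1 i * Matrix.fromRows (R1 i) 0) (i : Fin m) :
    (B1 i)ᵀ * B2 i = (C1 Q1 B1 i)ᵀ * R1 i := by
  have e : B2 i = @HMul.hMul _ _ _ Matrix.instHMulOfFintypeOfMulOfAddCommMonoid (Q1 i) (Matrix.fromRows (R1 i) 0) := hQR1 i
  conv_lhs => rw [aux_B1_eq B1 Q1 hQ1' i, e]
  rw [Matrix.transpose_mul, Matrix.mul_assoc, ← Matrix.mul_assoc (Q1 i)ᵀ, hQ1, Matrix.one_mul,
    aux_C0_eq, Matrix.transpose_fromRows, Matrix.fromCols_mul_fromRows,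
    Matrix.mul_zero, add_zero]

lemma aux_B2B2 (hQ1 : ∀ i, (Q1 i)ᵀ * Q1 i = 1)
    (hQR1 : ∀ i, B2 i = Q1 i * Matrix.fromRows (R1 i) 0) (i : Fin m) :
    (B2 i)ᵀ * B2 i = (R1 i)ᵀ * R1 i := by
  have e : B2 i = @HMul.hMul _ _ _ Matrix.instHMulOfFintypeOfMulOfAddCommMonoid (Q1 i) (Matrix.fromRows (R1 i) 0) := hQR1 i
  rw [e, Matrix.transpose_mul, Matrix.mul_assoc, ← Matrix.mul_assoc (Q1 i)ᵀ, hQ1,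
    Matrix.one_mul, Matrix.transpose_fromRows, Matrix.fromCols_mul_fromRows,
    Matrix.mul_zero, add_zero]

lemma aux_sumC2 :
    ∑ i, (C2 Q1 B1 i)ᵀ * C2 Q1 B1 i = (stackC2 Q1 B1)ᵀ * stackC2 Q1 B1 := by
  ext a a'
  rw [Matrix.sum_apply, Matrix.mul_apply, ← Finset.univ_sigma_univ, Finset.sum_sigma]
  exact Finset.sum_congr rfl fun i _ => by simp [Matrix.mul_apply, stackC2]

lemma aux_blocks :
    (twoLevelB B1 B2)ᵀ * twoLevelB B1 B2 =
      Matrix.fromBlocks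
        (∑ i, (B1 i)ᵀ * B1 i)
        (Matrix.of fun a jc => ((B1 jc.1)ᵀ * B2 jc.1) a jc.2)
        (Matrix.of fun ib a => ((B2 ib.1)ᵀ * B1 ib.1) ib.2 a)
        (Matrix.of fun ib jc =>
          if ib.1 = jc.1 then ((B2 ib.1)ᵀ * B2 ib.1) ib.2 jc.2 else 0) := by
  ext x y
  cases x with
  | inl a =>
    cases y with
    | inl a' =>
      rw [Matrix.mul_apply, ← Finset.univ_sigma_univ, Finset.sum_sigma]
      simp [Matrix.sum_apply, Matrix.mul_apply, twoLevelB]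
    | inr jc =>
      obtain ⟨j, c⟩ := jc
      rw [Matrix.mul_apply, ← Finset.univ_sigma_univ, Finset.sum_sigma]
      simp [Matrix.mul_apply, twoLevelB, mul_ite, mul_zero, ← Finset.sum_ite_eq' Finset.univ j
        (fun i => ∑ r, B1 i r a * B2 i r c)]
  | inr ib =>
    obtain ⟨i, b⟩ := ib
    cases y with
    | inl a' =>
      rw [Matrix.mul_apply, ← Finset.univ_sigma_univ, Finset.sum_sigma]
      simp [Matrix.mul_apply, twoLevelB, ite_mul, zero_mul, ← Finset.sum_ite_eq' Finset.univ i
        (fun l => ∑ r, B2 l r b * B1 l r a')]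
    | inr jc =>
      obtain ⟨j, c⟩ := jc
      rw [Matrix.mul_apply, ← Finset.univ_sigma_univ, Finset.sum_sigma]
      by_cases h : i = j
      · subst h
        simp [Matrix.mul_apply, twoLevelB, ite_mul, mul_ite, zero_mul, mul_zero,
          ← Finset.sum_ite_eq' Finset.univ i (fun l => ∑ r, B2 l r b * B2 l r c)]
      · simp [Matrix.mul_apply, twoLevelB, ite_mul, mul_ite, zero_mul, mul_zero, h,
          Finset.sum_ite_eq]
        intro l; exact absurd l.symm h

lemma aux_bd_mul (P E : Fin m → Matrix (Fin q) (Fin q) ℝ) :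
    (Matrix.of fun ib jc : Fin m × Fin q => if ib.1 = jc.1 then P ib.1 ib.2 jc.2 else 0) *
      (Matrix.of fun ib jc : Fin m × Fin q => if ib.1 = jc.1 then E ib.1 ib.2 jc.2 else 0) =
    Matrix.of fun ib jc : Fin m × Fin q =>
      if ib.1 = jc.1 then (P ib.1 * E ib.1) ib.2 jc.2 else 0 := by
  ext ⟨i, b⟩ ⟨j, c⟩
  rw [Matrix.mul_apply, Fintype.sum_prod_type]
  by_cases h : i = j
  · subst h
    simp [Matrix.mul_apply, ite_mul, mul_ite, zero_mul, mul_zero,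
      Finset.sum_ite_eq' Finset.univ i]
  · simp [Matrix.mul_apply, ite_mul, mul_ite, zero_mul, mul_zero, h,
      Finset.sum_ite_eq' Finset.univ]

lemma aux_bd_one :
    (Matrix.of fun ib jc : Fin m × Fin q =>
      if ib.1 = jc.1 then (1 : Matrix (Fin q) (Fin q) ℝ) ib.2 jc.2 else 0) = 1 := by
  ext ⟨i, b⟩ ⟨j, c⟩
  by_cases h : i = j
  · subst h
    simp [Matrix.one_apply, Prod.ext_iff]
  · simp [Matrix.one_apply, Prod.ext_iff, h]

lemma aux_bd_mul_one (P E : Fin m → Matrix (Fin q) (Fin q) ℝ) (h : ∀ i, P i * E i = 1) :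
    (Matrix.of fun ib jc : Fin m × Fin q => if ib.1 = jc.1 then P ib.1 ib.2 jc.2 else 0) *
      (Matrix.of fun ib jc : Fin m × Fin q => if ib.1 = jc.1 then E ib.1 ib.2 jc.2 else 0) =
      1 := by
  rw [aux_bd_mul]
  simp only [h]
  exact aux_bd_one

lemma aux_XEY (X' : Fin m → Matrix (Fin p) (Fin q) ℝ) (E : Fin m → Matrix (Fin q) (Fin q) ℝ)
    (Y' : Fin m → Matrix (Fin q) (Fin p) ℝ) :
    (Matrix.of fun a (jc : Fin m × Fin q) => X' jc.1 a jc.2) *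
        (Matrix.of fun ib jc : Fin m × Fin q => if ib.1 = jc.1 then E ib.1 ib.2 jc.2 else 0) *
        (Matrix.of fun (ib : Fin m × Fin q) a => Y' ib.1 ib.2 a) =
      ∑ j, X' j * E j * Y' j := by
  have h1 : (Matrix.of fun a (jc : Fin m × Fin q) => X' jc.1 a jc.2) *
      (Matrix.of fun ib jc : Fin m × Fin q => if ib.1 = jc.1 then E ib.1 ib.2 jc.2 else 0) =
      Matrix.of fun a (jc : Fin m × Fin q) => (X' jc.1 * E jc.1) a jc.2 := by
    ext a ⟨j, c⟩
    rw [Matrix.mul_apply, Fintype.sum_prod_type]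
    simp [Matrix.mul_apply, mul_ite, mul_zero, Finset.sum_ite_eq' Finset.univ j]
  rw [h1]
  ext a a'
  rw [Matrix.mul_apply, Fintype.sum_prod_type, Matrix.sum_apply]
  exact Finset.sum_congr rfl fun j _ => by simp [Matrix.mul_apply]

end Aux

theorem twoLevelLS_inverse_block11 {p q m s : ℕ} {k : Fin m → ℕ}
    (hp : 0 < p) (hq : 0 < q) (hm : 0 < m)
    (B1 : (i : Fin m) → Matrix (Fin q ⊕ Fin (k i)) (Fin p) ℝ)
    (B2 : (i : Fin m) → Matrix (Fin q ⊕ Fin (k i)) (Fin q) ℝ)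
    (hrank : (twoLevelB B1 B2).rank = p + m * q)
    (Q1 : (i : Fin m) → Matrix (Fin q ⊕ Fin (k i)) (Fin q ⊕ Fin (k i)) ℝ)
    (hQ1 : ∀ i, (Q1 i)ᵀ * Q1 i = 1) (hQ1' : ∀ i, Q1 i * (Q1 i)ᵀ = 1)
    (R1 : (i : Fin m) → Matrix (Fin q) (Fin q) ℝ)
    (hR1tri : ∀ i, (R1 i).BlockTriangular id)
    (hR1 : ∀ i, IsUnit (R1 i).det)
    (hQR1 : ∀ i, B2 i = Q1 i * Matrix.fromRows (R1 i) 0)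
    (Q : Matrix ((i : Fin m) × Fin (k i)) (Fin p ⊕ Fin s) ℝ)
    (hQ : Qᵀ * Q = 1) (hQ' : Q * Qᵀ = 1)
    (R : Matrix (Fin p) (Fin p) ℝ)
    (hRtri : R.BlockTriangular id) (hR : IsUnit R.det)
    (hQR : stackC2 Q1 B1 = Q * Matrix.fromRows R 0) :
    IsUnit ((twoLevelB B1 B2)ᵀ * twoLevelB B1 B2).det ∧
      (((twoLevelB B1 B2)ᵀ * twoLevelB B1 B2)⁻¹).submatrix Sum.inl Sum.inl =
        R⁻¹ * (Rᵀ)⁻¹ := by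
  classical
  have hdetRtR : IsUnit (Rᵀ * R).det := by
    rw [Matrix.det_mul, Matrix.det_transpose]; exact hR.mul hR
  have hA := aux_blocks B1 B2
  set W := ∑ i, (B1 i)ᵀ * B1 i with hW
  set X := (Matrix.of fun a jc => ((B1 jc.1)ᵀ * B2 jc.1) a jc.2 :
    Matrix (Fin p) (Fin m × Fin q) ℝ) with hX
  set Y := (Matrix.of fun ib a => ((B2 ib.1)ᵀ * B1 ib.1) ib.2 a :
    Matrix (Fin m × Fin q) (Fin p) ℝ) with hY
  set D := (Matrix.of fun ib jc =>
    if ib.1 = jc.1 then ((B2 ib.1)ᵀ * B2 ib.1) ib.2 jc.2 else 0 :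
    Matrix (Fin m × Fin q) (Fin m × Fin q) ℝ) with hD
  have hD' : D = Matrix.of fun ib jc =>
      if ib.1 = jc.1 then ((R1 ib.1)ᵀ * R1 ib.1) ib.2 jc.2 else 0 := by
    rw [hD]; ext ⟨i, b⟩ ⟨j, c⟩
    by_cases h : i = j <;> simp [h, aux_B2B2 B2 Q1 R1 hQ1 hQR1]
  set E := (Matrix.of fun ib jc =>
    if ib.1 = jc.1 then ((R1 ib.1)⁻¹ * ((R1 ib.1)ᵀ)⁻¹) ib.2 jc.2 else 0 :
    Matrix (Fin m × Fin q) (Fin m × Fin q) ℝ) with hE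
  have hdet1 : ∀ i, IsUnit ((R1 i)ᵀ * R1 i).det := fun i => by
    rw [Matrix.det_mul, Matrix.det_transpose]; exact (hR1 i).mul (hR1 i)
  have hDE : D * E = 1 := by
    rw [hD', hE]
    exact aux_bd_mul_one (fun i => (R1 i)ᵀ * R1 i) (fun i => (R1 i)⁻¹ * ((R1 i)ᵀ)⁻¹)
      (fun i => by
        show (R1 i)ᵀ * R1 i * ((R1 i)⁻¹ * ((R1 i)ᵀ)⁻¹) = 1
        rw [← Matrix.mul_inv_rev, Matrix.mul_nonsing_inv _ (hdet1 i)])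
  have hED : E * D = 1 := by
    rw [hD', hE]
    exact aux_bd_mul_one (fun i => (R1 i)⁻¹ * ((R1 i)ᵀ)⁻¹) (fun i => (R1 i)ᵀ * R1 i)
      (fun i => by
        show (R1 i)⁻¹ * ((R1 i)ᵀ)⁻¹ * ((R1 i)ᵀ * R1 i) = 1
        rw [← Matrix.mul_inv_rev, Matrix.nonsing_inv_mul _ (hdet1 i)])
  letI iD : Invertible D := ⟨E, hED, hDE⟩
  have hinvD : ⅟D = E := rfl
  have hXEY : X * ⅟D * Y = ∑ j, (C1 Q1 B1 j)ᵀ * C1 Q1 B1 j := by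
    rw [hinvD, hX, hY, hE]
    refine (aux_XEY (fun j => (B1 j)ᵀ * B2 j) (fun j => (R1 j)⁻¹ * ((R1 j)ᵀ)⁻¹)
      (fun j => (B2 j)ᵀ * B1 j)).trans ?_
    refine Finset.sum_congr rfl fun j _ => ?_
    show (B1 j)ᵀ * B2 j * ((R1 j)⁻¹ * ((R1 j)ᵀ)⁻¹) * ((B2 j)ᵀ * B1 j) = _
    have hYj : (B2 j)ᵀ * B1 j = (R1 j)ᵀ * C1 Q1 B1 j := by
      have := congrArg Matrix.transpose (aux_B1B2 B1 B2 Q1 R1 hQ1 hQ1' hQR1 j)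
      simpa [Matrix.transpose_mul] using this
    rw [aux_B1B2 B1 B2 Q1 R1 hQ1 hQ1' hQR1 j, hYj]
    have hRdet := hR1 j
    have hRtdet : IsUnit (R1 j)ᵀ.det := by rwa [Matrix.det_transpose]
    calc (C1 Q1 B1 j)ᵀ * R1 j * ((R1 j)⁻¹ * ((R1 j)ᵀ)⁻¹) * ((R1 j)ᵀ * C1 Q1 B1 j)
        = (C1 Q1 B1 j)ᵀ * (R1 j * ((R1 j)⁻¹ *
            (((R1 j)ᵀ)⁻¹ * ((R1 j)ᵀ * C1 Q1 B1 j)))) := by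
          simp only [Matrix.mul_assoc]
      _ = (C1 Q1 B1 j)ᵀ * C1 Q1 B1 j := by
          rw [Matrix.nonsing_inv_mul_cancel_left _ _ hRtdet,
            Matrix.mul_nonsing_inv_cancel_left _ _ hRdet]
  have hW' : W = ∑ j, (C1 Q1 B1 j)ᵀ * C1 Q1 B1 j + Rᵀ * R := by
    rw [hW]
    have hs : (stackC2 Q1 B1)ᵀ * stackC2 Q1 B1 = Rᵀ * R := by
      have e : stackC2 Q1 B1 = @HMul.hMul _ _ _ Matrix.instHMulOfFintypeOfMulOfAddCommMonoid Q (Matrix.fromRows R 0) := hQR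
      rw [e, Matrix.transpose_mul, Matrix.mul_assoc, ← Matrix.mul_assoc Qᵀ, hQ,
        Matrix.one_mul, Matrix.transpose_fromRows, Matrix.fromCols_mul_fromRows,
        Matrix.transpose_zero, Matrix.zero_mul, add_zero]
    simp_rw [aux_B1B1 B1 Q1 hQ1 hQ1']
    rw [Finset.sum_add_distrib, aux_sumC2, hs]
  have hS : W - X * ⅟D * Y = Rᵀ * R := by
    rw [hW', hXEY, add_sub_cancel_left]
  haveI iS : Invertible (W - X * ⅟D * Y) :=
    Matrix.invertibleOfIsUnitDet _ (by rw [hS]; exact hdetRtR)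
  haveI iF : Invertible (Matrix.fromBlocks W X Y D) := Matrix.fromBlocks₂₂Invertible W X Y D
  haveI iA : Invertible ((twoLevelB B1 B2)ᵀ * twoLevelB B1 B2) := iF.copy _ hA
  refine ⟨Matrix.isUnit_det_of_invertible _, ?_⟩
  have h1 : ((twoLevelB B1 B2)ᵀ * twoLevelB B1 B2)⁻¹ = (Matrix.fromBlocks W X Y D)⁻¹ := by
    rw [hA]
  rw [h1, ← Matrix.invOf_eq_nonsing_inv, Matrix.invOf_fromBlocks₂₂_eq]
  have h2 : (Matrix.fromBlocks (⅟(W - X * ⅟D * Y)) (-(⅟(W - X * ⅟D * Y) * X * ⅟D))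
      (-(⅟D * Y * ⅟(W - X * ⅟D * Y))) (⅟D + ⅟D * Y * ⅟(W - X * ⅟D * Y) * X * ⅟D)).submatrix
      Sum.inl Sum.inl = ⅟(W - X * ⅟D * Y) := rfl
  rw [h2, Matrix.invOf_eq_nonsing_inv, hS, Matrix.mul_inv_rev]
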